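/- Let (X_Ω, σ, d) be a sponge system built from a subshift Ω over the alphabet ∏_{l=1}^r {0,...,m_l−1} with 2 ≤ m_1 ≤ ... ≤ m_r, and let π_i(Ω) be the projection of Ω to the first i coordinate factors. Then for all N, M ∈ ℕ: #(X_Ω|_N, ‖·‖_∞, m_r m_1^{−M}) ≤ |Ω|_N|^{L_r(M)} · ∏_{i=1}^{r−1} |π_i(Ω)|_N|^{L_i(M) − L_{i+1}(M)} and #_sep(X_Ω|_N, ‖·‖_∞, m_1^{−M}) ≥ |Ω|_N|^{L_r(M)} · ∏_{i=1}^{r−1} |π_i(Ω)|_N|^{L_i(M) − L_{i+1}(M)}, where L_i(M) = ⌊M log m_1/log m_i⌋. -/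

import Mathlib

open scoped Classical

noncomputable def diamBy {X : Type*} (d : X → X → ℝ) (U : Set X) : ℝ :=
  sSup {c : ℝ | ∃ x ∈ U, ∃ y ∈ U, d x y = c}

noncomputable def covNumBy {X : Type*} (d : X → X → ℝ) (ε : ℝ) : ℕ :=
  sInf {n | ∃ F : Fin n → Set X,
    (∀ i, diamBy d (F i) < ε) ∧ (⋃ i, F i) = Set.univ}

noncomputable def sepNumBy {X : Type*} (d : X → X → ℝ) (ε : ℝ) : ℕ :=
  sSup {n | ∃ s : Finset X, s.card = n ∧
    (s : Set X).Pairwise (fun x y => ε ≤ d x y)}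

noncomputable def spongeSet (m : ℕ → ℕ) (Ω : Set (ℕ → ℕ → ℕ)) :
    Set (ℕ → ℕ → ℝ) :=
  {z | ∃ ω : ℕ → (ℕ → ℕ → ℕ), (∀ k, ω k ∈ Ω) ∧
    ∀ j l, z j l = ∑' k : ℕ, (ω k j l : ℝ) / (m l : ℝ) ^ (k + 1)}

noncomputable def supDist (r : ℕ) (z w : ℕ → ℕ → ℝ) : ℝ :=
  ⨆ j : ℕ, ⨆ l ∈ Finset.Icc 1 r, |z j l - w j l|

def projN (N : ℕ) (z : ℕ → ℕ → ℝ) : ℕ → ℕ → ℝ :=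
  fun j l => if j < N then z j l else 0

def symRestr (N : ℕ) (x : ℕ → ℕ → ℕ) : ℕ → ℕ → ℕ :=
  fun k l => if k < N then x k l else 0

/-- Truncation onto the first `i` coordinate factors (the factor map `π_i`). -/
def truncL (i : ℕ) (x : ℕ → ℕ → ℕ) : ℕ → ℕ → ℕ :=
  fun k l => if l ≤ i then x k l else 0

/-- The set of admissible length-`N` words of the factor subshift `π_i(Ω)`. -/
def projWords (Ω : Set (ℕ → ℕ → ℕ)) (i N : ℕ) : Set (ℕ → ℕ → ℕ) :=
  (fun x => truncL i (symRestr N x)) '' Ω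

noncomputable def level (m : ℕ → ℕ) (i M : ℕ) : ℕ :=
  ⌊(M : ℝ) * Real.log (m 1) / Real.log (m i)⌋₊


noncomputable def digitVal (m : ℕ) (a : ℕ → ℕ) : ℝ :=
  ∑' k : ℕ, (a k : ℝ) / (m : ℝ) ^ (k + 1)

section dig
variable {m : ℕ} (hm : 2 ≤ m)
include hm

lemma digit_cast_le {a : ℕ} (ha : a < m) : (a : ℝ) ≤ (m : ℝ) - 1 := by
  have : (a : ℝ) + 1 ≤ (m : ℝ) := by exact_mod_cast Nat.succ_le_of_lt ha
  linarith

lemma digit_summable {a : ℕ → ℕ} (ha : ∀ k, a k < m) :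
    Summable (fun k : ℕ => (a k : ℝ) / (m : ℝ) ^ (k + 1)) := by
  have hm0 : (0:ℝ) < m := by positivity
  have h1 : ((m:ℝ))⁻¹ < 1 := by
    rw [inv_lt_one_iff₀]; right; exact_mod_cast by omega
  apply Summable.of_nonneg_of_le (fun k => by positivity)
    (fun k => ?_) (summable_geometric_of_lt_one (by positivity) h1)
  calc (a k : ℝ) / (m:ℝ) ^ (k+1) ≤ (m:ℝ) / (m:ℝ)^(k+1) := by
        gcongr; exact_mod_cast (ha k).le
    _ = ((m:ℝ)⁻¹)^k := by rw [pow_succ', inv_pow]; field_simp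

lemma digitVal_nonneg (a : ℕ → ℕ) : 0 ≤ digitVal m a :=
  tsum_nonneg (fun k => by positivity)

lemma head_le {a : ℕ → ℕ} (ha : ∀ k, a k < m) (K : ℕ) :
    ∑ k ∈ Finset.range K, (a k : ℝ) / (m : ℝ) ^ (k + 1) ≤ 1 - ((m:ℝ)⁻¹) ^ K := by
  have hm0 : (0:ℝ) < m := by positivity
  have hm1 : (m:ℝ) ≠ 0 := ne_of_gt hm0
  induction K with
  | zero => simp
  | succ K ih =>
    rw [Finset.sum_range_succ]
    have hb : (a K : ℝ) / (m:ℝ) ^ (K+1) ≤ ((m:ℝ) - 1) / (m:ℝ)^(K+1) := by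
      gcongr; exact digit_cast_le hm (ha K)
    have key : (1 - ((m:ℝ)⁻¹) ^ K) + ((m:ℝ) - 1) / (m:ℝ)^(K+1) = 1 - ((m:ℝ)⁻¹)^(K+1) := by
      rw [inv_pow, inv_pow]
      field_simp
      ring
    linarith

lemma head_nonneg (a : ℕ → ℕ) (K : ℕ) :
    0 ≤ ∑ k ∈ Finset.range K, (a k : ℝ) / (m : ℝ) ^ (k + 1) :=
  Finset.sum_nonneg fun k _ => by positivity

lemma digitVal_le_one {a : ℕ → ℕ} (ha : ∀ k, a k < m) : digitVal m a ≤ 1 := by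
  have hm0 : (0:ℝ) < m := by positivity
  apply Real.tsum_le_of_sum_range_le (fun k => by positivity)
  intro K
  have := head_le hm ha K
  have h2 : (0:ℝ) ≤ ((m:ℝ)⁻¹)^K := by positivity
  linarith

lemma digitVal_split {a : ℕ → ℕ} (ha : ∀ k, a k < m) (K : ℕ) :
    digitVal m a = (∑ k ∈ Finset.range K, (a k : ℝ) / (m : ℝ) ^ (k + 1))
      + ((m:ℝ)⁻¹) ^ K * digitVal m (fun k => a (k + K)) := by
  have hm0 : (0:ℝ) < m := by positivity
  have hm1 : (m:ℝ) ≠ 0 := ne_of_gt hm0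
  rw [digitVal, ← Summable.sum_add_tsum_nat_add K (digit_summable hm ha)]
  have hterm : ∀ k : ℕ, (a (k + K) : ℝ) / (m:ℝ) ^ (k + K + 1)
      = ((m:ℝ)⁻¹)^K * ((a (k + K) : ℝ) / (m:ℝ) ^ (k + 1)) := by
    intro k
    rw [inv_pow, show k + K + 1 = (k+1) + K by ring, pow_add]
    field_simp
  rw [tsum_congr hterm, tsum_mul_left, digitVal]

lemma digitVal_close {a b : ℕ → ℕ} (ha : ∀ k, a k < m) (hb : ∀ k, b k < m)
    (K : ℕ) (h : ∀ k, k < K → a k = b k) :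
    |digitVal m a - digitVal m b| ≤ ((m:ℝ)⁻¹) ^ K := by
  rw [digitVal_split hm ha K, digitVal_split hm hb K]
  have hhead : ∑ k ∈ Finset.range K, (a k : ℝ) / (m : ℝ) ^ (k + 1)
      = ∑ k ∈ Finset.range K, (b k : ℝ) / (m : ℝ) ^ (k + 1) := by
    refine Finset.sum_congr rfl fun k hk => ?_
    rw [h k (Finset.mem_range.mp hk)]
  rw [hhead, show ∀ x y z : ℝ, (x + y) - (x + z) = y - z from fun x y z => by ring,
    ← mul_sub, abs_mul, abs_of_nonneg (by positivity : (0:ℝ) ≤ ((m:ℝ)⁻¹)^K)]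
  have h1 := digitVal_nonneg hm (fun k => a (k + K))
  have h2 := digitVal_nonneg hm (fun k => b (k + K))
  have h3 := digitVal_le_one hm (fun k => ha (k + K))
  have h4 := digitVal_le_one hm (fun k => hb (k + K))
  have : |digitVal m (fun k => a (k+K)) - digitVal m (fun k => b (k+K))| ≤ 1 := by
    rw [abs_le]; constructor <;> linarith
  calc ((m:ℝ)⁻¹)^K * |digitVal m (fun k => a (k+K)) - digitVal m (fun k => b (k+K))|
      ≤ ((m:ℝ)⁻¹)^K * 1 := by gcongr
    _ = ((m:ℝ)⁻¹)^K := mul_one _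

lemma digitVal_sep_aux {a b : ℕ → ℕ} (ha : ∀ k, a k < m) (hb : ∀ k, b k < m)
    (K : ℕ) (htail : ∀ k, K + 1 ≤ k → a k = b k) (h0 : b 0 < a 0) :
    ((m:ℝ)⁻¹) ^ (K + 1) ≤ digitVal m a - digitVal m b := by
  have hm0 : (0:ℝ) < m := by positivity
  have hm1 : (m:ℝ) ≠ 0 := ne_of_gt hm0
  have e1 := digitVal_split hm ha 1
  have e2 := digitVal_split hm hb 1
  simp only [Finset.range_one, Finset.sum_singleton, pow_one] at e1 e2
  set sa : ℕ → ℕ := fun k => a (k + 1) with hsa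
  set sb : ℕ → ℕ := fun k => b (k + 1) with hsb
  -- tails of sa and sb agree from K on
  have htt : ∀ k, (fun k => sa (k + K)) k = (fun k => sb (k + K)) k := by
    intro k; simp only [hsa, hsb]; exact htail (k + K + 1) (by omega)
  have e3 := digitVal_split hm (fun k => ha (k+1)) K
  have e4 := digitVal_split hm (fun k => hb (k+1)) K
  have etail : digitVal m (fun k => sa (k + K)) = digitVal m (fun k => sb (k + K)) := by
    unfold digitVal; exact tsum_congr fun k => by rw [htt k]
  have hsadiff : digitVal m sa - digitVal m sb
      = (∑ k ∈ Finset.range K, (sa k : ℝ) / (m : ℝ) ^ (k + 1))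
        - ∑ k ∈ Finset.range K, (sb k : ℝ) / (m : ℝ) ^ (k + 1) := by
    rw [e3, e4, etail]; ring
  have hlow : -(1 - ((m:ℝ)⁻¹)^K) ≤ digitVal m sa - digitVal m sb := by
    rw [hsadiff]
    have := head_le hm (fun k => hb (k+1)) K
    have := head_nonneg hm sa K
    linarith
  have hd0 : (1:ℝ) ≤ (a 0 : ℝ) - (b 0 : ℝ) := by
    have : b 0 + 1 ≤ a 0 := h0
    have : ((b 0 : ℝ)) + 1 ≤ (a 0 : ℝ) := by exact_mod_cast this
    linarith
  have : digitVal m a - digitVal m b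
      = ((a 0 : ℝ) - (b 0:ℝ)) / (m:ℝ)^(0+1) + (m:ℝ)⁻¹ * (digitVal m sa - digitVal m sb) := by
    rw [e1, e2]; ring
  rw [this]
  have hinv : (0:ℝ) < (m:ℝ)⁻¹ := by positivity
  have step := mul_le_mul_of_nonneg_left hlow hinv.le
  have expand : (m:ℝ)⁻¹ * -(1 - ((m:ℝ)⁻¹)^K) = ((m:ℝ)⁻¹)^(K+1) - (m:ℝ)⁻¹ := by ring
  rw [expand] at step
  have h01 : (1:ℝ)/(m:ℝ) ≤ ((a 0 : ℝ) - (b 0:ℝ)) / (m:ℝ)^(0+1) := by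
    rw [zero_add, pow_one, div_le_div_iff₀ hm0 hm0]
    nlinarith [hd0, hm0]
  have hone : (1:ℝ)/(m:ℝ) = (m:ℝ)⁻¹ := one_div _
  linarith [step, h01]

lemma digitVal_sep {a b : ℕ → ℕ} (ha : ∀ k, a k < m) (hb : ∀ k, b k < m)
    (K : ℕ) (htail : ∀ k, K ≤ k → a k = b k) (hdiff : ∃ k, k < K ∧ a k ≠ b k) :
    ((m:ℝ)⁻¹) ^ K ≤ |digitVal m a - digitVal m b| := by
  induction K generalizing a b with
  | zero => obtain ⟨k, hk, _⟩ := hdiff; omega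
  | succ K ih =>
    by_cases h0 : a 0 = b 0
    · -- first digits agree; recurse on shifts
      have e1 := digitVal_split hm ha 1
      have e2 := digitVal_split hm hb 1
      simp only [Finset.range_one, Finset.sum_singleton, pow_one] at e1 e2
      have hda : digitVal m a - digitVal m b
          = (m:ℝ)⁻¹ * (digitVal m (fun k => a (k+1)) - digitVal m (fun k => b (k+1))) := by
        rw [e1, e2, h0]; ring
      have hrec := ih (fun k => ha (k+1)) (fun k => hb (k+1))
        (fun k hk => htail (k+1) (by omega))
        (by obtain ⟨k, hk, hne⟩ := hdiff
            have hk0 : k ≠ 0 := by rintro rfl; exact hne h0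
            refine ⟨k - 1, by omega, ?_⟩
            have hke : k - 1 + 1 = k := by omega
            rw [hke]; exact hne)
      rw [hda, abs_mul, abs_of_nonneg (by positivity : (0:ℝ) ≤ (m:ℝ)⁻¹)]
      calc ((m:ℝ)⁻¹)^(K+1) = (m:ℝ)⁻¹ * ((m:ℝ)⁻¹)^K := by ring
        _ ≤ (m:ℝ)⁻¹ * |digitVal m (fun k => a (k+1)) - digitVal m (fun k => b (k+1))| := by
            gcongr
      -- done
    · rcases Nat.lt_or_ge (b 0) (a 0) with hlt | hge
      · have := digitVal_sep_aux hm ha hb K htail hlt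
        calc ((m:ℝ)⁻¹)^(K+1) ≤ digitVal m a - digitVal m b := this
          _ ≤ |digitVal m a - digitVal m b| := le_abs_self _
      · have hlt : a 0 < b 0 := by omega
        have := digitVal_sep_aux hm hb ha K (fun k hk => (htail k hk).symm) hlt
        rw [abs_sub_comm]
        calc ((m:ℝ)⁻¹)^(K+1) ≤ digitVal m b - digitVal m a := this
          _ ≤ |digitVal m b - digitVal m a| := le_abs_self _

end dig

/-- Row index of digit position `k`: equals `r` for `k < L r`, and on
`[L (i+1), L i)` it equals `i`. -/
noncomputable def rowIdxF (r : ℕ) (L : ℕ → ℕ) (k : ℕ) : ℕ :=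
  if k < L r then r else sInf {i | L (i + 1) ≤ k}

section blk
variable {r : ℕ} {L : ℕ → ℕ} (hr : 1 ≤ r)
  (hanti : ∀ a b, 1 ≤ a → a ≤ b → b ≤ r → L b ≤ L a)
include hr hanti

lemma rowIdxF_spec {k : ℕ} (hk : k < L 1) :
    1 ≤ rowIdxF r L k ∧ rowIdxF r L k ≤ r ∧ k < L (rowIdxF r L k) ∧
      (∀ l, 1 ≤ l → l ≤ r → k < L l → l ≤ rowIdxF r L k) := by
  unfold rowIdxF
  by_cases h : k < L r
  · rw [if_pos h]
    exact ⟨hr, le_refl _, h, fun l _ hl _ => hl⟩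
  · rw [if_neg h]
    push_neg at h
    have hne : (r - 1) ∈ {i | L (i + 1) ≤ k} := by
      simp only [Set.mem_setOf_eq]
      rw [show r - 1 + 1 = r by omega]
      exact h
    have hmem := Nat.sInf_mem ⟨_, hne⟩
    set i := sInf {i | L (i + 1) ≤ k} with hi
    have hile : i ≤ r - 1 := Nat.sInf_le hne
    have hi1 : 1 ≤ i := by
      rcases Nat.eq_zero_or_pos i with h0 | h1
      · exfalso
        rw [h0] at hmem
        simp only [Set.mem_setOf_eq, zero_add] at hmem
        omega
      · exact h1
    have hki : k < L i := by
      have : i - 1 ∉ {i | L (i + 1) ≤ k} := Nat.notMem_of_lt_sInf (by omega)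
      simp only [Set.mem_setOf_eq, not_le] at this
      rwa [show i - 1 + 1 = i by omega] at this
    refine ⟨hi1, by omega, hki, fun l hl1 hlr hkl => ?_⟩
    by_contra hcon
    push_neg at hcon
    have : L l ≤ L (i + 1) := hanti (i+1) l (by omega) (by omega) hlr
    simp only [Set.mem_setOf_eq] at hmem
    omega

lemma rowIdxF_big {k : ℕ} (hk : k < L r) : rowIdxF r L k = r := if_pos hk

lemma rowIdxF_block {i k : ℕ} (hi1 : 1 ≤ i) (hir : i + 1 ≤ r)
    (hk1 : L (i + 1) ≤ k) (hk2 : k < L i) : rowIdxF r L k = i := by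
  have hLr : L r ≤ L (i + 1) := hanti (i+1) r (by omega) hir (le_refl _)
  unfold rowIdxF
  rw [if_neg (by omega)]
  apply le_antisymm
  · exact Nat.sInf_le hk1
  · have hmem := Nat.sInf_mem (⟨i, hk1⟩ : Set.Nonempty {i | L (i + 1) ≤ k})
    simp only [Set.mem_setOf_eq] at hmem
    by_contra hcon
    push_neg at hcon
    have : L i ≤ L (sInf {i | L (i + 1) ≤ k} + 1) :=
      hanti _ i (by omega) (by omega) (by omega)
    omega

lemma rowIdxF_lower {l k : ℕ} (hl1 : 1 ≤ l) (hlr : l ≤ r)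
    (hLl : L l ≤ k) (hk1 : k < L 1) : rowIdxF r L k < l := by
  obtain ⟨h1, h2, h3, _⟩ := rowIdxF_spec hr hanti hk1
  by_contra hcon
  push_neg at hcon
  have : L (rowIdxF r L k) ≤ L l := hanti l _ hl1 hcon h2
  omega

lemma prod_rowIdxF (f : ℕ → ℕ) :
    ∏ k ∈ Finset.range (L 1), f (rowIdxF r L k)
      = f r ^ L r * ∏ i ∈ Finset.Icc 1 (r - 1), f i ^ (L i - L (i + 1)) := by
  have key : ∀ n, n ≤ r - 1 →
      ∏ k ∈ Finset.range (L (r - n)), f (rowIdxF r L k)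
        = f r ^ L r * ∏ i ∈ Finset.Icc (r - n) (r - 1), f i ^ (L i - L (i + 1)) := by
    intro n
    induction n with
    | zero =>
      intro _
      rw [Nat.sub_zero, Finset.Icc_eq_empty (by omega), Finset.prod_empty, mul_one]
      rw [Finset.prod_congr rfl (fun k hk => by
        rw [rowIdxF_big hr hanti (Finset.mem_range.mp hk)])]
      rw [Finset.prod_const, Finset.card_range]
    | succ n ih =>
      intro hn
      set t := r - (n + 1) with ht
      have ht1 : 1 ≤ t := by omega
      have htr : t + 1 = r - n := by omega
      have hle : L (t + 1) ≤ L t := hanti t (t+1) ht1 (by omega) (by omega)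
      have split : ∏ k ∈ Finset.range (L t), f (rowIdxF r L k)
          = (∏ k ∈ Finset.range (L (t+1)), f (rowIdxF r L k))
            * ∏ k ∈ Finset.Ico (L (t+1)) (L t), f (rowIdxF r L k) := by
        rw [Finset.range_eq_Ico,
          ← Finset.prod_Ico_consecutive (fun k => f (rowIdxF r L k))
            (Nat.zero_le (L (t+1))) hle, ← Finset.range_eq_Ico]
      have const : ∏ k ∈ Finset.Ico (L (t+1)) (L t), f (rowIdxF r L k)
          = f t ^ (L t - L (t + 1)) := by
        rw [Finset.prod_congr rfl (fun k hk => by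
          obtain ⟨hk1, hk2⟩ := Finset.mem_Ico.mp hk
          rw [rowIdxF_block hr hanti ht1 (by omega) hk1 hk2])]
        rw [Finset.prod_const, Nat.card_Ico]
      have hicc : Finset.Icc t (r - 1) = insert t (Finset.Icc (t + 1) (r - 1)) := by
        ext x
        simp only [Finset.mem_Icc, Finset.mem_insert]
        omega
      rw [split, const, htr, ih (by omega), hicc,
        Finset.prod_insert (by simp), htr]
      ring
  have := key (r - 1) (le_refl _)
  rwa [show r - (r - 1) = 1 by omega] at this

end blk


section lev
variable {m : ℕ → ℕ} {M : ℕ}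

lemma level_anti (h1 : 2 ≤ m 1) {a b : ℕ} (h2 : 2 ≤ m a) (hab : m a ≤ m b) :
    level m b M ≤ level m a M := by
  apply Nat.floor_mono
  have hc : (0:ℝ) ≤ (M : ℝ) * Real.log (m 1) := by
    apply mul_nonneg (Nat.cast_nonneg _)
    apply Real.log_nonneg; exact_mod_cast by omega
  have hla : (0:ℝ) < Real.log (m a) := Real.log_pos (by exact_mod_cast by omega)
  have hlb : Real.log (m a) ≤ Real.log (m b) := by
    apply Real.log_le_log (by positivity); exact_mod_cast hab
  exact div_le_div_of_nonneg_left hc hla hlb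

lemma pow_level_le (h1 : 2 ≤ m 1) {l : ℕ} (h2 : 2 ≤ m l) :
    ((m l : ℝ)) ^ (level m l M) ≤ (m 1 : ℝ) ^ M := by
  have hml : (1:ℝ) < (m l : ℝ) := by exact_mod_cast by omega
  have hm1 : (1:ℝ) < (m 1 : ℝ) := by exact_mod_cast by omega
  have hll : (0:ℝ) < Real.log (m l) := Real.log_pos hml
  have hx : (0:ℝ) ≤ (M : ℝ) * Real.log (m 1) / Real.log (m l) := by
    apply div_nonneg _ hll.le
    exact mul_nonneg (Nat.cast_nonneg _) (Real.log_nonneg hm1.le)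
  have hfl : (level m l M : ℝ) ≤ (M : ℝ) * Real.log (m 1) / Real.log (m l) :=
    Nat.floor_le hx
  rw [← Real.log_le_log_iff (by positivity) (by positivity), Real.log_pow, Real.log_pow]
  calc (level m l M : ℝ) * Real.log (m l)
      ≤ ((M : ℝ) * Real.log (m 1) / Real.log (m l)) * Real.log (m l) := by
        apply mul_le_mul_of_nonneg_right hfl hll.le
    _ = (M : ℝ) * Real.log (m 1) := by field_simp

lemma pow_lt_level_succ (h1 : 2 ≤ m 1) {l : ℕ} (h2 : 2 ≤ m l) :
    (m 1 : ℝ) ^ M < ((m l : ℝ)) ^ (level m l M + 1) := by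
  have hml : (1:ℝ) < (m l : ℝ) := by exact_mod_cast by omega
  have hm1 : (1:ℝ) < (m 1 : ℝ) := by exact_mod_cast by omega
  have hll : (0:ℝ) < Real.log (m l) := Real.log_pos hml
  have hfl : (M : ℝ) * Real.log (m 1) / Real.log (m l) < (level m l M : ℝ) + 1 := by
    have h := Nat.lt_floor_add_one ((M:ℝ) * Real.log (m 1) / Real.log (m l))
    exact_mod_cast h
  rw [← Real.log_lt_log_iff (by positivity) (by positivity), Real.log_pow, Real.log_pow]
  have := mul_lt_mul_of_pos_right hfl hll
  rw [div_mul_cancel₀ _ hll.ne'] at this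
  calc (M : ℝ) * Real.log (m 1) < ((level m l M : ℝ) + 1) * Real.log (m l) := this
    _ = ((level m l M + 1 : ℕ) : ℝ) * Real.log (m l) := by push_cast; ring

end lev

section supd


lemma supDist_le {r : ℕ} {z w : ℕ → ℕ → ℝ} {C : ℝ}
    (h : ∀ j l, 1 ≤ l → l ≤ r → |z j l - w j l| ≤ C) (hC : 0 ≤ C) :
    supDist r z w ≤ C := by
  apply Real.iSup_le _ hC
  intro j
  apply Real.iSup_le _ hC
  intro l
  apply Real.iSup_le _ hC
  intro hl
  obtain ⟨h1, h2⟩ := Finset.mem_Icc.mp hl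
  exact h j l h1 h2

lemma le_supDist {r : ℕ} {z w : ℕ → ℕ → ℝ}
    (hb : ∀ j l, 1 ≤ l → l ≤ r → |z j l - w j l| ≤ 1)
    {j l : ℕ} (hl1 : 1 ≤ l) (hlr : l ≤ r) :
    |z j l - w j l| ≤ supDist r z w := by
  have hmem : l ∈ Finset.Icc 1 r := Finset.mem_Icc.mpr ⟨hl1, hlr⟩
  have inner_le : ∀ j', (⨆ l' ∈ Finset.Icc 1 r, |z j' l' - w j' l'|) ≤ 1 := by
    intro j'
    apply Real.iSup_le _ zero_le_one
    intro l'
    apply Real.iSup_le _ zero_le_one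
    intro hl'
    obtain ⟨h1, h2⟩ := Finset.mem_Icc.mp hl'
    exact hb j' l' h1 h2
  have step1 : |z j l - w j l| ≤ ⨆ l' ∈ Finset.Icc 1 r, |z j l' - w j l'| := by
    have e : |z j l - w j l| = ⨆ (_ : l ∈ Finset.Icc 1 r), |z j l - w j l| :=
      (ciSup_pos (f := fun _ : l ∈ Finset.Icc 1 r => |z j l - w j l|) hmem).symm
    rw [e]
    apply le_ciSup (f := fun l' => ⨆ (_ : l' ∈ Finset.Icc 1 r), |z j l' - w j l'|)
    refine ⟨1, ?_⟩
    rintro x ⟨l', rfl⟩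
    apply Real.iSup_le _ zero_le_one
    intro hl'
    obtain ⟨h1, h2⟩ := Finset.mem_Icc.mp hl'
    exact hb j l' h1 h2
  refine step1.trans ?_
  apply le_ciSup (f := fun j' => ⨆ l' ∈ Finset.Icc 1 r, |z j' l' - w j' l'|)
  refine ⟨1, ?_⟩
  rintro x ⟨j', rfl⟩
  exact inner_le j'

end supd


section pw
variable {r : ℕ} {m : ℕ → ℕ} {Ω : Set (ℕ → ℕ → ℕ)}
  (hΩdig : ∀ x ∈ Ω, ∀ k l, (1 ≤ l → l ≤ r → x k l < m l) ∧ (l = 0 ∨ r < l → x k l = 0))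
include hΩdig

lemma mem_projWords_struct {i N : ℕ} {w : ℕ → ℕ → ℕ} (hw : w ∈ projWords Ω i N) :
    ∃ x ∈ Ω, ∀ j l, w j l = if j < N ∧ 1 ≤ l ∧ l ≤ i ∧ l ≤ r then x j l else 0 := by
  obtain ⟨x, hx, rfl⟩ := hw
  refine ⟨x, hx, fun j l => ?_⟩
  simp only [truncL, symRestr]
  by_cases hli : l ≤ i
  · rw [if_pos hli]
    by_cases hj : j < N
    · rw [if_pos hj]
      by_cases h1 : 1 ≤ l
      · by_cases hlr : l ≤ r
        · rw [if_pos ⟨hj, h1, hli, hlr⟩]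
        · rw [if_neg (by tauto)]
          exact (hΩdig x hx j l).2 (Or.inr (by omega))
      · rw [if_neg (by tauto)]
        exact (hΩdig x hx j l).2 (Or.inl (by omega))
    · rw [if_neg hj, if_neg (by tauto)]
  · rw [if_neg hli, if_neg (by tauto)]

lemma projWords_zero {i N : ℕ} {w : ℕ → ℕ → ℕ} (hw : w ∈ projWords Ω i N)
    {j l : ℕ} (h : ¬(j < N ∧ 1 ≤ l ∧ l ≤ i ∧ l ≤ r)) : w j l = 0 := by
  obtain ⟨x, hx, he⟩ := mem_projWords_struct hΩdig hw
  rw [he j l, if_neg h]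

lemma projWords_lt {i N : ℕ} {w : ℕ → ℕ → ℕ} (hw : w ∈ projWords Ω i N)
    {j l : ℕ} (h1 : 1 ≤ l) (hlr : l ≤ r) (h2 : 2 ≤ m l) : w j l < m l := by
  obtain ⟨x, hx, he⟩ := mem_projWords_struct hΩdig hw
  rw [he j l]
  by_cases hc : j < N ∧ 1 ≤ l ∧ l ≤ i ∧ l ≤ r
  · rw [if_pos hc]; exact (hΩdig x hx j l).1 h1 hlr
  · rw [if_neg hc]; omega

lemma projWords_finite (hmr : ∀ l, 1 ≤ l → l ≤ r → m l ≤ m r)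
    (hm2 : ∀ l, 1 ≤ l → l ≤ r → 2 ≤ m l) (i N : ℕ) :
    (projWords Ω i N).Finite := by
  have hfin : Finite ↥(projWords Ω i N) := by
    apply Finite.of_injective
      (fun w : ↥(projWords Ω i N) =>
        (fun j : Fin N => fun l : Fin (r + 1) =>
          (⟨min (w.1 j.1 l.1) (m r), Nat.lt_succ_of_le (Nat.min_le_right _ _)⟩ : Fin (m r + 1))))
    intro w1 w2 h
    apply Subtype.ext
    funext j l
    by_cases hc : j < N ∧ 1 ≤ l ∧ l ≤ i ∧ l ≤ r
    · have hl1 : l < r + 1 := by omega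
      have h' := congrFun (congrFun h ⟨j, hc.1⟩) ⟨l, hl1⟩
      simp only [Fin.mk.injEq] at h'
      have hb1 : w1.1 j l < m l := projWords_lt hΩdig w1.2 hc.2.1 hc.2.2.2
        (hm2 l hc.2.1 hc.2.2.2)
      have hb2 : w2.1 j l < m l := projWords_lt hΩdig w2.2 hc.2.1 hc.2.2.2
        (hm2 l hc.2.1 hc.2.2.2)
      have hml : m l ≤ m r := hmr l hc.2.1 hc.2.2.2
      rw [min_eq_left (by omega), min_eq_left (by omega)] at h'
      exact h'
    · rw [projWords_zero hΩdig w1.2 hc, projWords_zero hΩdig w2.2 hc]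
  exact (Set.finite_coe_iff).mp hfin

end pw

/-- A chosen extension in `Ω` of an admissible word. -/
noncomputable def extWord (Ω : Set (ℕ → ℕ → ℕ)) (i N : ℕ) (w : ℕ → ℕ → ℕ) : ℕ → ℕ → ℕ :=
  if h : w ∈ projWords Ω i N then h.choose else fun _ _ => 0

lemma extWord_spec {Ω : Set (ℕ → ℕ → ℕ)} {i N : ℕ} {w : ℕ → ℕ → ℕ}
    (h : w ∈ projWords Ω i N) :
    extWord Ω i N w ∈ Ω ∧ truncL i (symRestr N (extWord Ω i N w)) = w := by
  rw [extWord, dif_pos h]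
  exact ⟨h.choose_spec.1, h.choose_spec.2⟩

/-- Digit sequence associated to a chosen block of admissible words. -/
noncomputable def digFun (r : ℕ) (m : ℕ → ℕ) (Ω : Set (ℕ → ℕ → ℕ)) (N M : ℕ)
    (ω0 : ℕ → ℕ → ℕ)
    (σ : (k : ℕ) → k ∈ Finset.range (level m 1 M) → (ℕ → ℕ → ℕ)) (k : ℕ) : ℕ → ℕ → ℕ :=
  if hk : k < level m 1 M then
    extWord Ω (rowIdxF r (fun i => level m i M) k) N (σ k (Finset.mem_range.mpr hk))
  else ω0

set_option maxHeartbeats 1600000 in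
/-- Counting bounds for the projections of a sponge system:
`#(X_Ω|_N, ‖·‖_∞, m_r m_1^{−M}) ≤ |Ω|_N|^{L_r(M)} ∏_{i=1}^{r−1} |π_i(Ω)|_N|^{L_i(M)−L_{i+1}(M)}`
and `#_sep(X_Ω|_N, ‖·‖_∞, m_1^{−M})` is at least the same quantity. -/
theorem sponge_covNum_bounds (r : ℕ) (hr : 1 ≤ r) (m : ℕ → ℕ)
    (hm2 : ∀ l, 1 ≤ l → l ≤ r → 2 ≤ m l)
    (hmono : ∀ l, 1 ≤ l → l < r → m l ≤ m (l + 1))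
    (Ω : Set (ℕ → ℕ → ℕ))
    (hΩdig : ∀ x ∈ Ω, ∀ k l, (1 ≤ l → l ≤ r → x k l < m l) ∧ (l = 0 ∨ r < l → x k l = 0))
    (hΩclosed : IsClosed Ω)
    (hΩshift : ∀ x ∈ Ω, (fun k l => x (k + 1) l) ∈ Ω)
    (hΩne : Ω.Nonempty)
    (N M : ℕ) (hN : 1 ≤ N) (hM : 1 ≤ M) :
    covNumBy (fun z w : ↥(projN N '' spongeSet m Ω) => supDist r z w)
        ((m r : ℝ) * (m 1 : ℝ) ^ (-(M : ℤ))) ≤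
      Nat.card (projWords Ω r N) ^ level m r M *
        ∏ i ∈ Finset.Icc 1 (r - 1),
          Nat.card (projWords Ω i N) ^ (level m i M - level m (i + 1) M) ∧
    Nat.card (projWords Ω r N) ^ level m r M *
        ∏ i ∈ Finset.Icc 1 (r - 1),
          Nat.card (projWords Ω i N) ^ (level m i M - level m (i + 1) M) ≤
      sepNumBy (fun z w : ↥(projN N '' spongeSet m Ω) => supDist r z w)
        ((m 1 : ℝ) ^ (-(M : ℤ))) := by
  have hm1 : 2 ≤ m 1 := hm2 1 le_rfl hr
  have hmr2 : 2 ≤ m r := hm2 r hr le_rfl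
  have mMono : ∀ a b, 1 ≤ a → a ≤ b → b ≤ r → m a ≤ m b := by
    intro a b h1 hab hbr
    induction b, hab using Nat.le_induction with
    | base => exact le_rfl
    | succ b hb ih => exact le_trans (ih (by omega)) (hmono b (by omega) (by omega))
  have hanti : ∀ a b, 1 ≤ a → a ≤ b → b ≤ r → level m b M ≤ level m a M := by
    intro a b h1 hab hbr
    exact level_anti hm1 (hm2 a h1 (le_trans hab hbr)) (mMono a b h1 hab hbr)
  have hfin : ∀ i, (projWords Ω i N).Finite :=
    fun i => projWords_finite hΩdig (fun l h1 h2 => mMono l r h1 h2 le_rfl) hm2 i N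
  have hwit0 : ∀ z : ↥(projN N '' spongeSet m Ω), ∃ ω : ℕ → (ℕ → ℕ → ℕ),
      (∀ k, ω k ∈ Ω) ∧
      (∀ j l, j < N → (z : ℕ → ℕ → ℝ) j l = ∑' k : ℕ, (ω k j l : ℝ) / (m l : ℝ) ^ (k + 1)) ∧
      (∀ j l, ¬ j < N → (z : ℕ → ℕ → ℝ) j l = 0) := by
    rintro ⟨z, z', ⟨ω, hω, hz'⟩, rfl⟩
    refine ⟨ω, hω, fun j l hj => ?_, fun j l hj => ?_⟩
    · simp only [projN, if_pos hj]; exact hz' j l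
    · simp only [projN, if_neg hj]
  choose wit hwitΩ hwitval hwitzero using hwit0
  have hwitdig : ∀ z k j l, 1 ≤ l → l ≤ r → wit z k j l < m l :=
    fun z k j l h1 h2 => (hΩdig _ (hwitΩ z k) j l).1 h1 h2
  have hvaldv : ∀ (z : ↥(projN N '' spongeSet m Ω)) j l, j < N →
      (z : ℕ → ℕ → ℝ) j l = digitVal (m l) (fun k => wit z k j l) := by
    intro z j l hj; rw [hwitval z j l hj]; rfl
  have coordClose : ∀ (z w : ↥(projN N '' spongeSet m Ω)) (j l K : ℕ), 1 ≤ l → l ≤ r →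
      (j < N → ∀ k, k < K → wit z k j l = wit w k j l) →
      |(z : ℕ → ℕ → ℝ) j l - (w : ℕ → ℕ → ℝ) j l| ≤ ((m l : ℝ)⁻¹) ^ K := by
    intro z w j l K h1 h2 hd
    by_cases hj : j < N
    · rw [hvaldv z j l hj, hvaldv w j l hj]
      exact digitVal_close (hm2 l h1 h2) (fun k => hwitdig z k j l h1 h2)
        (fun k => hwitdig w k j l h1 h2) K (hd hj)
    · rw [hwitzero z j l hj, hwitzero w j l hj]
      simp only [sub_zero, abs_zero]
      positivity
  have hone : ∀ (z w : ↥(projN N '' spongeSet m Ω)) j l, 1 ≤ l → l ≤ r →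
      |(z : ℕ → ℕ → ℝ) j l - (w : ℕ → ℕ → ℝ) j l| ≤ 1 := by
    intro z w j l h1 h2
    by_cases hj : j < N
    · rw [hvaldv z j l hj, hvaldv w j l hj]
      have b1 := digitVal_nonneg (hm2 l h1 h2) (fun k => wit z k j l)
      have b2 := digitVal_nonneg (hm2 l h1 h2) (fun k => wit w k j l)
      have b3 := digitVal_le_one (hm2 l h1 h2) (fun k => hwitdig z k j l h1 h2)
      have b4 := digitVal_le_one (hm2 l h1 h2) (fun k => hwitdig w k j l h1 h2)
      rw [abs_le]; constructor <;> linarith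
    · rw [hwitzero z j l hj, hwitzero w j l hj]
      simp only [sub_zero, abs_zero]; exact zero_le_one
  have hεs : ((m 1 : ℝ)) ^ (-(M : ℤ)) = ((m 1 : ℝ) ^ M)⁻¹ := by
    rw [zpow_neg, zpow_natCast]
  have hm1R : (1:ℝ) < (m 1 : ℝ) := by exact_mod_cast by omega
  have hbig : ∀ l, 1 ≤ l → l ≤ r →
      ((m 1 : ℝ)) ^ (-(M : ℤ)) ≤ ((m l : ℝ)⁻¹) ^ (level m l M) := by
    intro l h1 h2
    have hml0 : (0:ℝ) < (m l : ℝ) := by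
      have := hm2 l h1 h2; positivity
    rw [hεs, inv_pow]
    apply inv_anti₀ (pow_pos hml0 _)
    exact pow_level_le hm1 (hm2 l h1 h2)
  have hsmall : ∀ l, 1 ≤ l → l ≤ r →
      ((m l : ℝ)⁻¹) ^ (level m l M) < (m r : ℝ) * ((m 1 : ℝ)) ^ (-(M : ℤ)) := by
    intro l h1 h2
    have hp := pow_lt_level_succ (M := M) hm1 (hm2 l h1 h2)
    have hmlr : (m l : ℝ) ≤ (m r : ℝ) := by exact_mod_cast mMono l r h1 h2 le_rfl
    have hml0 : (0:ℝ) < (m l : ℝ) := by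
      have := hm2 l h1 h2; positivity
    rw [hεs, inv_pow]
    rw [inv_lt_iff_one_lt_mul₀ (pow_pos hml0 _)]
    have e1 : (m r : ℝ) * ((m 1:ℝ) ^ M)⁻¹ * (m l : ℝ) ^ level m l M
        = ((m r : ℝ) * (m l : ℝ) ^ level m l M) / (m 1:ℝ) ^ M := by
      field_simp
    rw [e1, lt_div_iff₀ (by positivity)]
    have e2 : (m l : ℝ) ^ (level m l M + 1) = (m l : ℝ) * (m l : ℝ) ^ (level m l M) := by ring
    rw [e2] at hp
    nlinarith [pow_pos hml0 (level m l M)]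
  have hWfcard : ∀ i, (hfin i).toFinset.card = Nat.card (projWords Ω i N) := by
    intro i
    rw [Nat.card_coe_set_eq, Set.ncard_eq_toFinset_card _ (hfin i)]
  set S : Finset ((k : ℕ) → k ∈ Finset.range (level m 1 M) → (ℕ → ℕ → ℕ)) :=
    (Finset.range (level m 1 M)).pi
      (fun k => (hfin (rowIdxF r (fun i => level m i M) k)).toFinset) with hS
  have hσmem : ∀ σ ∈ S, ∀ k (hk : k ∈ Finset.range (level m 1 M)),
      σ k hk ∈ projWords Ω (rowIdxF r (fun i => level m i M) k) N := by
    intro σ hσ k hk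
    have := (Finset.mem_pi.mp hσ) k hk
    rwa [Set.Finite.mem_toFinset] at this
  have hScard : S.card = Nat.card (projWords Ω r N) ^ level m r M *
      ∏ i ∈ Finset.Icc 1 (r - 1),
        Nat.card (projWords Ω i N) ^ (level m i M - level m (i + 1) M) := by
    rw [hS, Finset.card_pi]
    rw [Finset.prod_congr rfl (fun k _ => hWfcard (rowIdxF r (fun i => level m i M) k))]
    exact prod_rowIdxF hr hanti (fun i => Nat.card (projWords Ω i N))
  constructor
  · -- covering bound
    apply Nat.sInf_le
    have hQS : ∀ z : ↥(projN N '' spongeSet m Ω),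
        (fun k (_ : k ∈ Finset.range (level m 1 M)) =>
          truncL (rowIdxF r (fun i => level m i M) k) (symRestr N (wit z k))) ∈ S := by
      intro z
      rw [hS, Finset.mem_pi]
      intro k hk
      rw [Set.Finite.mem_toFinset]
      exact ⟨wit z k, hwitΩ z k, rfl⟩
    refine ⟨fun i => {z | (fun k (_ : k ∈ Finset.range (level m 1 M)) =>
        truncL (rowIdxF r (fun i => level m i M) k) (symRestr N (wit z k)))
          = (S.equivFin.symm (Fin.cast hScard.symm i)).1}, ?_, ?_⟩
    · intro i
      have hIccne : (Finset.Icc 1 r).Nonempty := ⟨1, Finset.mem_Icc.mpr ⟨le_rfl, hr⟩⟩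
      set Cmax := (Finset.Icc 1 r).sup' hIccne (fun l => ((m l : ℝ)⁻¹) ^ (level m l M))
        with hCmax
      have hCle : ∀ l, 1 ≤ l → l ≤ r → ((m l : ℝ)⁻¹) ^ (level m l M) ≤ Cmax := by
        intro l h1 h2
        rw [hCmax]
        exact Finset.le_sup' (fun l => ((m l : ℝ)⁻¹) ^ (level m l M))
          (Finset.mem_Icc.mpr ⟨h1, h2⟩)
      have hC0 : 0 ≤ Cmax := le_trans (by positivity) (hCle 1 le_rfl hr)
      have hClt : Cmax < (m r : ℝ) * ((m 1 : ℝ)) ^ (-(M : ℤ)) := by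
        rw [hCmax, Finset.sup'_lt_iff]
        intro l hl
        obtain ⟨h1, h2⟩ := Finset.mem_Icc.mp hl
        exact hsmall l h1 h2
      apply lt_of_le_of_lt _ hClt
      apply Real.sSup_le _ hC0
      rintro c ⟨z, hz, w, hw, rfl⟩
      simp only [Set.mem_setOf_eq] at hz hw
      have hQzw := hz.trans hw.symm
      apply supDist_le _ hC0
      intro j l h1 h2
      refine le_trans (coordClose z w j l (level m l M) h1 h2 ?_) (hCle l h1 h2)
      intro hj k hk
      have hkL1 : k < level m 1 M := lt_of_lt_of_le hk (hanti 1 l le_rfl h1 h2)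
      have hkm : k ∈ Finset.range (level m 1 M) := Finset.mem_range.mpr hkL1
      have h3 : truncL (rowIdxF r (fun i => level m i M) k) (symRestr N (wit z k))
          = truncL (rowIdxF r (fun i => level m i M) k) (symRestr N (wit w k)) :=
        congrFun (congrFun hQzw k) hkm
      have h4 := congrFun (congrFun h3 j) l
      have hlrow : l ≤ rowIdxF r (fun i => level m i M) k :=
        (rowIdxF_spec hr hanti hkL1).2.2.2 l h1 h2 hk
      simpa only [truncL, symRestr, if_pos hlrow, if_pos hj] using h4
    · -- covering is everything
      apply Set.eq_univ_of_forall
      intro z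
      apply Set.mem_iUnion.mpr
      refine ⟨Fin.cast hScard (S.equivFin ⟨_, hQS z⟩), ?_⟩
      show _ = _
      have hcast : Fin.cast hScard.symm (Fin.cast hScard (S.equivFin ⟨_, hQS z⟩))
          = S.equivFin ⟨_, hQS z⟩ := by
        apply Fin.ext; rfl
      rw [hcast, Equiv.symm_apply_apply]
  · -- separation bound
    set ω0 : ℕ → ℕ → ℕ := hΩne.choose with hω0
    have hω0Ω : ω0 ∈ Ω := hΩne.choose_spec
    have hdigΩ : ∀ σ ∈ S, ∀ k, digFun r m Ω N M ω0 σ k ∈ Ω := by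
      intro σ hσ k
      unfold digFun
      by_cases hk : k < level m 1 M
      · rw [dif_pos hk]
        exact (extWord_spec (hσmem σ hσ k (Finset.mem_range.mpr hk))).1
      · rw [dif_neg hk]; exact hω0Ω
    have hdigdig : ∀ σ ∈ S, ∀ k j l, 1 ≤ l → l ≤ r → digFun r m Ω N M ω0 σ k j l < m l :=
      fun σ hσ k j l h1 h2 => (hΩdig _ (hdigΩ σ hσ k) j l).1 h1 h2
    have hseceval : ∀ σ ∈ S, ∀ k (hk : k ∈ Finset.range (level m 1 M)), ∀ j l, j < N →
        l ≤ rowIdxF r (fun i => level m i M) k →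
        digFun r m Ω N M ω0 σ k j l = σ k hk j l := by
      intro σ hσ k hk j l hj hlrow
      have hkL : k < level m 1 M := Finset.mem_range.mp hk
      unfold digFun
      rw [dif_pos hkL]
      have hs := extWord_spec (hσmem σ hσ k (Finset.mem_range.mpr hkL))
      have h4 := congrFun (congrFun hs.2 j) l
      simpa only [truncL, symRestr, if_pos hlrow, if_pos hj] using h4
    -- the separated points
    have hptX : ∀ σ ∈ S,
        projN N (fun j l => ∑' k : ℕ, (digFun r m Ω N M ω0 σ k j l : ℝ) / (m l : ℝ) ^ (k + 1))
          ∈ projN N '' spongeSet m Ω := by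
      intro σ hσ
      exact ⟨_, ⟨digFun r m Ω N M ω0 σ, hdigΩ σ hσ, fun j l => rfl⟩, rfl⟩
    set pt : ((k : ℕ) → k ∈ Finset.range (level m 1 M) → (ℕ → ℕ → ℕ)) → (ℕ → ℕ → ℝ) :=
      fun σ => projN N
        (fun j l => ∑' k : ℕ, (digFun r m Ω N M ω0 σ k j l : ℝ) / (m l : ℝ) ^ (k + 1)) with hpt
    have hptval : ∀ σ j l, j < N →
        pt σ j l = digitVal (m l) (fun k => digFun r m Ω N M ω0 σ k j l) := by
      intro σ j l hj
      simp only [hpt, projN, if_pos hj]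
      rfl
    have hptzero : ∀ σ j l, ¬ j < N → pt σ j l = 0 := by
      intro σ j l hj
      simp only [hpt, projN, if_neg hj]
    have hptone : ∀ σ ∈ S, ∀ σ' ∈ S, ∀ j l, 1 ≤ l → l ≤ r →
        |pt σ j l - pt σ' j l| ≤ 1 := by
      intro σ hσ σ' hσ' j l h1 h2
      by_cases hj : j < N
      · rw [hptval σ j l hj, hptval σ' j l hj]
        have b1 := digitVal_nonneg (hm2 l h1 h2) (fun k => digFun r m Ω N M ω0 σ k j l)
        have b2 := digitVal_nonneg (hm2 l h1 h2) (fun k => digFun r m Ω N M ω0 σ' k j l)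
        have b3 := digitVal_le_one (hm2 l h1 h2) (fun k => hdigdig σ hσ k j l h1 h2)
        have b4 := digitVal_le_one (hm2 l h1 h2) (fun k => hdigdig σ' hσ' k j l h1 h2)
        rw [abs_le]; constructor <;> linarith
      · rw [hptzero σ j l hj, hptzero σ' j l hj]
        simp only [sub_zero, abs_zero]; exact zero_le_one
    -- separation of distinct data
    have hsep : ∀ σ ∈ S, ∀ σ' ∈ S, σ ≠ σ' →
        (m 1 : ℝ) ^ (-(M : ℤ)) ≤ supDist r (pt σ) (pt σ') := by
      intro σ hσ σ' hσ' hne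
      have hkd : ∃ k, ∃ hk : k ∈ Finset.range (level m 1 M), σ k hk ≠ σ' k hk := by
        by_contra h
        push_neg at h
        exact hne (funext fun k => funext fun hk => h k hk)
      obtain ⟨k0, hk0, hwne⟩ := hkd
      have hjl : ∃ j l, σ k0 hk0 j l ≠ σ' k0 hk0 j l := by
        by_contra h
        push_neg at h
        exact hwne (funext fun j => funext fun l => h j l)
      obtain ⟨j0, l0, hne0⟩ := hjl
      have hcond : j0 < N ∧ 1 ≤ l0 ∧ l0 ≤ rowIdxF r (fun i => level m i M) k0 ∧ l0 ≤ r := by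
        by_contra hc
        rw [projWords_zero hΩdig (hσmem σ hσ k0 hk0) hc,
          projWords_zero hΩdig (hσmem σ' hσ' k0 hk0) hc] at hne0
        exact hne0 rfl
      set Dset : Set ℕ := {l | 1 ≤ l ∧ l ≤ r ∧ ∃ k, ∃ hk : k ∈ Finset.range (level m 1 M),
        ∃ j, j < N ∧ σ k hk j l ≠ σ' k hk j l} with hDset
      have hDne : Dset.Nonempty := ⟨l0, hcond.2.1, hcond.2.2.2, k0, hk0, j0, hcond.1, hne0⟩
      obtain ⟨hl'1, hl'r, k', hk', j', hj'N, hne'⟩ := Nat.sInf_mem hDne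
      have hk'L1 : k' < level m 1 M := Finset.mem_range.mp hk'
      have hl'row : sInf Dset ≤ rowIdxF r (fun i => level m i M) k' := by
        by_contra hc
        have hcond' : ¬ (j' < N ∧ 1 ≤ sInf Dset ∧
            sInf Dset ≤ rowIdxF r (fun i => level m i M) k' ∧ sInf Dset ≤ r) := by tauto
        rw [projWords_zero hΩdig (hσmem σ hσ k' hk') hcond',
          projWords_zero hΩdig (hσmem σ' hσ' k' hk') hcond'] at hne'
        exact hne' rfl
      obtain ⟨hs1, hs2, hs3, hs4⟩ := rowIdxF_spec hr hanti hk'L1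
      have hk'Ll : k' < level m (sInf Dset) M :=
        lt_of_lt_of_le hs3 (hanti (sInf Dset) _ hl'1 hl'row hs2)
      have hak' : digFun r m Ω N M ω0 σ k' j' (sInf Dset)
          ≠ digFun r m Ω N M ω0 σ' k' j' (sInf Dset) := by
        rw [hseceval σ hσ k' hk' j' (sInf Dset) hj'N hl'row,
          hseceval σ' hσ' k' hk' j' (sInf Dset) hj'N hl'row]
        exact hne'
      have htails : ∀ k, level m (sInf Dset) M ≤ k →
          digFun r m Ω N M ω0 σ k j' (sInf Dset) = digFun r m Ω N M ω0 σ' k j' (sInf Dset) := by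
        intro k hkk
        by_cases hkL : k < level m 1 M
        · have hkm : k ∈ Finset.range (level m 1 M) := Finset.mem_range.mpr hkL
          have hrow_lt : rowIdxF r (fun i => level m i M) k < sInf Dset :=
            rowIdxF_lower hr hanti hl'1 hl'r hkk hkL
          have hweq : σ k hkm = σ' k hkm := by
            by_contra hc
            have hjl2 : ∃ j l, σ k hkm j l ≠ σ' k hkm j l := by
              by_contra h
              push_neg at h
              exact hc (funext fun j => funext fun l => h j l)
            obtain ⟨j2, l2, hne2⟩ := hjl2
            have hcond2 : j2 < N ∧ 1 ≤ l2 ∧ l2 ≤ rowIdxF r (fun i => level m i M) k ∧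
                l2 ≤ r := by
              by_contra hcc
              rw [projWords_zero hΩdig (hσmem σ hσ k hkm) hcc,
                projWords_zero hΩdig (hσmem σ' hσ' k hkm) hcc] at hne2
              exact hne2 rfl
            have hmem2 : l2 ∈ Dset := ⟨hcond2.2.1, hcond2.2.2.2, k, hkm, j2, hcond2.1, hne2⟩
            have := Nat.sInf_le hmem2
            omega
          unfold digFun
          rw [dif_pos hkL, dif_pos hkL, hweq]
        · unfold digFun
          rw [dif_neg hkL, dif_neg hkL]
      have hd := digitVal_sep (hm2 _ hl'1 hl'r)
        (fun k => hdigdig σ hσ k j' (sInf Dset) hl'1 hl'r)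
        (fun k => hdigdig σ' hσ' k j' (sInf Dset) hl'1 hl'r)
        (level m (sInf Dset) M) htails ⟨k', hk'Ll, hak'⟩
      calc (m 1 : ℝ) ^ (-(M : ℤ))
          ≤ ((m (sInf Dset) : ℝ)⁻¹) ^ (level m (sInf Dset) M) := hbig _ hl'1 hl'r
        _ ≤ |pt σ j' (sInf Dset) - pt σ' j' (sInf Dset)| := by
            rw [hptval σ j' (sInf Dset) hj'N, hptval σ' j' (sInf Dset) hj'N]
            exact hd
        _ ≤ supDist r (pt σ) (pt σ') :=
            le_supDist (fun j l h1 h2 => hptone σ hσ σ' hσ' j l h1 h2) hl'1 hl'r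
    -- positivity of the separation constant
    have hεpos : (0:ℝ) < (m 1 : ℝ) ^ (-(M : ℤ)) := by
      rw [hεs]; positivity
    -- the separated finset
    have hinj : ∀ σ1 ∈ S, ∀ σ2 ∈ S, σ1 ≠ σ2 → pt σ1 ≠ pt σ2 := by
      intro σ1 h1 σ2 h2 hne he
      have := hsep σ1 h1 σ2 h2 hne
      rw [he] at this
      have hzero : supDist r (pt σ2) (pt σ2) ≤ 0 := by
        apply supDist_le _ le_rfl
        intro j l _ _
        simp
      linarith
    apply le_csSup
    · -- the set of separated cardinalities is bounded above
      refine ⟨((Finset.range (M + 1)).pi (fun _ => (hfin r).toFinset)).card, ?_⟩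
      rintro n ⟨s, hsc, hps⟩
      rw [← hsc]
      apply Finset.card_le_card_of_injOn
        (fun z => fun k (_ : k ∈ Finset.range (M + 1)) => truncL r (symRestr N (wit z k)))
      · intro z _
        rw [Finset.mem_coe, Finset.mem_pi]
        intro k hk
        rw [Set.Finite.mem_toFinset]
        exact ⟨wit z k, hwitΩ z k, rfl⟩
      · intro z hz w hw hzw
        by_contra hne
        have hsep' := hps hz hw hne
        have hclose : supDist r (z : ℕ → ℕ → ℝ) (w : ℕ → ℕ → ℝ) ≤ ((m 1 : ℝ)⁻¹) ^ (M + 1) := by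
          apply supDist_le _ (by positivity)
          intro j l h1 h2
          have step : |(z : ℕ → ℕ → ℝ) j l - (w : ℕ → ℕ → ℝ) j l| ≤ ((m l : ℝ)⁻¹) ^ (M+1) := by
            apply coordClose z w j l (M+1) h1 h2
            intro hj k hk
            have hkm : k ∈ Finset.range (M + 1) := Finset.mem_range.mpr hk
            have h3 : truncL r (symRestr N (wit z k)) = truncL r (symRestr N (wit w k)) :=
              congrFun (congrFun hzw k) hkm
            have h4 := congrFun (congrFun h3 j) l
            simpa only [truncL, symRestr, if_pos h2, if_pos hj] using h4
          refine le_trans step ?_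
          apply pow_le_pow_left₀ (by positivity)
          apply inv_anti₀ (by positivity)
          exact_mod_cast mMono 1 l le_rfl h1 h2
        have hlt : ((m 1 : ℝ)⁻¹) ^ (M + 1) < (m 1 : ℝ) ^ (-(M : ℤ)) := by
          rw [hεs, ← inv_pow]
          apply pow_lt_pow_right_of_lt_one₀ (by positivity) _ (by omega)
          rw [inv_lt_one_iff₀]; right; exact hm1R
        linarith
    · -- our separated family realizes the cardinality
      have hDec : DecidableEq (↥(projN N '' spongeSet m Ω)) := Classical.decEq _
      have hmap : ∀ σ : {x // x ∈ S}, pt σ.1 ∈ projN N '' spongeSet m Ω :=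
        fun σ => hptX σ.1 σ.2
      have hinj2 : Set.InjOn
          (fun σ : {x // x ∈ S} => (⟨pt σ.1, hmap σ⟩ : ↥(projN N '' spongeSet m Ω)))
          ↑S.attach := by
        intro σ1 _ σ2 _ he
        by_contra hne12
        have hne' : σ1.1 ≠ σ2.1 := fun h => hne12 (Subtype.ext h)
        have hpe : pt σ1.1 = pt σ2.1 := congrArg Subtype.val he
        exact hinj σ1.1 σ1.2 σ2.1 σ2.2 hne' hpe
      refine ⟨@Finset.image _ _ hDec
        (fun σ : {x // x ∈ S} => (⟨pt σ.1, hmap σ⟩ : ↥(projN N '' spongeSet m Ω)))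
        S.attach, ?_, ?_⟩
      · rw [Finset.card_image_of_injOn hinj2, Finset.card_attach]
        exact hScard
      · intro x hx y hy hxy
        simp only [Finset.coe_image, Set.mem_image, Finset.mem_coe, Finset.mem_attach]
          at hx hy
        obtain ⟨σ1, -, rfl⟩ := hx
        obtain ⟨σ2, -, rfl⟩ := hy
        have hne12 : σ1.1 ≠ σ2.1 := by
          intro h
          apply hxy
          congr 1
          exact congrArg pt h
        exact hsep σ1.1 σ1.2 σ2.1 σ2.2 hne12
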